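/- Let q be a prime, n ≥ 2, and R a commutative ring with unity. If every n×n matrix over R is a sum of q-th powers of matrices over R, then every element of R is a q-th power modulo q·R. -/

import Mathlib

open Polynomial Matrix

-- generalize matPolyEquiv_eq_X_pow_sub_C to CommRing
theorem my_matPolyEquiv_eq_X_pow_sub_C {n : Type*} [DecidableEq n] [Fintype n]
    {K : Type*} (k : ℕ) [CommRing K] (M : Matrix n n K) :
    matPolyEquiv ((expand K k : K[X] →+* K[X]).mapMatrix (charmatrix (M ^ k))) =
      X ^ k - C (M ^ k) := by
  ext m i j
  rw [coeff_sub, coeff_C, matPolyEquiv_coeff_apply, RingHom.mapMatrix_apply, Matrix.map_apply,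
    AlgHom.coe_toRingHom, Matrix.sub_apply, coeff_X_pow]
  by_cases hij : i = j
  · rw [hij, charmatrix_apply_eq, map_sub, expand_C, expand_X, coeff_sub, coeff_X_pow, coeff_C]
    split_ifs with mp m0 <;> simp only [Matrix.one_apply_eq, Matrix.zero_apply]
  · rw [charmatrix_apply_ne _ _ _ hij, map_neg, expand_C, coeff_neg, coeff_C]
    split_ifs with m0 mp <;>
      simp only [hij, zero_sub, Matrix.zero_apply, sub_zero, neg_zero, Matrix.one_apply_ne, Ne,
        not_false_iff]

theorem my_charpoly_pow_char {n : Type*} [DecidableEq n] [Fintype n] [Nonempty n]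
    {S : Type*} [CommRing S] (q : ℕ) [hq : Fact q.Prime] [CharP S q]
    (M : Matrix n n S) : (M ^ q).charpoly = (M.charpoly).map (frobenius S q) := by
  apply Polynomial.expand_injective hq.out.pos
  have h1 : expand S q ((M ^ q).charpoly) = (M.charpoly) ^ q := by
    unfold Matrix.charpoly
    rw [AlgHom.map_det, ← coe_detMonoidHom,
      ← (detMonoidHom : Matrix n n S[X] →* S[X]).map_pow]
    apply congr_arg det
    refine matPolyEquiv.injective ?_
    rw [map_pow, matPolyEquiv_charmatrix, sub_pow_char_of_commute _ (C M).commute_X, ← C_pow]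
    exact my_matPolyEquiv_eq_X_pow_sub_C q M
  rw [h1, ← Polynomial.map_frobenius_expand, Polynomial.map_expand]

theorem my_trace_pow_char {n : Type*} [DecidableEq n] [Fintype n] [Nonempty n]
    {S : Type*} [CommRing S] (q : ℕ) [hq : Fact q.Prime] [CharP S q]
    (M : Matrix n n S) : Matrix.trace (M ^ q) = (Matrix.trace M) ^ q := by
  have h := my_charpoly_pow_char q M
  have h2 := congr_arg (fun f => f.coeff (Fintype.card n - 1)) h
  simp only [coeff_map] at h2
  rw [Matrix.trace_eq_neg_charpoly_coeff, Matrix.trace_eq_neg_charpoly_coeff, h2,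
    frobenius_def, neg_pow, neg_one_pow_char S q, neg_mul, one_mul]
theorem elem_qth_power_mod_q (R : Type*) [CommRing R] (q n : ℕ) (hq : q.Prime) (hn : 2 ≤ n)
    (h : ∀ M : Matrix (Fin n) (Fin n) R,
      ∃ (l : ℕ) (N : Fin l → Matrix (Fin n) (Fin n) R), M = ∑ i, (N i) ^ q) :
    ∀ α : R, ∃ y z : R, α = y ^ q + q * z := by
  intro α
  haveI : Fact q.Prime := ⟨hq⟩
  haveI : Nonempty (Fin n) := ⟨⟨0, by omega⟩⟩
  set I : Ideal R := Ideal.span {(q : R)}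
  let π : R →+* R ⧸ I := Ideal.Quotient.mk I
  have hπq : (q : R ⧸ I) = 0 := by
    have : π (q : R) = 0 := Ideal.Quotient.eq_zero_iff_mem.2 (Ideal.subset_span rfl)
    simpa using this
  -- decompose the matrix with α in the corner
  obtain ⟨l, N, hN⟩ := h (Matrix.diagonal (fun i => if i = ⟨0, by omega⟩ then α else 0))
  set t : R := ∑ i, Matrix.trace (N i) with ht
  have htrM : Matrix.trace (Matrix.diagonal (fun i : Fin n => if i = ⟨0, by omega⟩ then α else 0))
      = α := by
    rw [Matrix.trace_diagonal]
    simp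
  have key : π α = π (t ^ q) := by
    rcases subsingleton_or_nontrivial (R ⧸ I) with hS | hS
    · exact Subsingleton.elim _ _
    · haveI : CharP (R ⧸ I) q := (CharP.charP_iff_prime_eq_zero hq).2 hπq
      haveI : ExpChar (R ⧸ I) q := ExpChar.prime hq
      have hmap := congr_arg (fun M => Matrix.trace (π.mapMatrix M)) hN
      simp only [map_sum, map_pow, Matrix.trace_sum] at hmap
      have htr : ∀ M : Matrix (Fin n) (Fin n) R,
          Matrix.trace (π.mapMatrix M) = π (Matrix.trace M) := by
        intro M
        simp [Matrix.trace, RingHom.mapMatrix_apply, Matrix.map_apply, map_sum, Matrix.diag]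
      calc π α = Matrix.trace (π.mapMatrix
            (Matrix.diagonal (fun i : Fin n => if i = ⟨0, by omega⟩ then α else 0))) := by
            rw [htr, htrM]
        _ = ∑ i, Matrix.trace ((π.mapMatrix (N i)) ^ q) := hmap
        _ = ∑ i, (Matrix.trace (π.mapMatrix (N i))) ^ q := by
            exact Finset.sum_congr rfl fun i _ => my_trace_pow_char q _
        _ = (∑ i, Matrix.trace (π.mapMatrix (N i))) ^ q := (sum_pow_char _ _ _).symm
        _ = π (t ^ q) := by
            rw [map_pow, ht, map_sum]
            exact congr_arg (· ^ q) (Finset.sum_congr rfl fun i _ => htr (N i))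
  have hmem : α - t ^ q ∈ I := by
    rw [← Ideal.Quotient.eq_zero_iff_mem, map_sub, key, sub_self]
  obtain ⟨z, hz⟩ := Ideal.mem_span_singleton'.1 hmem
  exact ⟨t, z, by linear_combination -hz⟩
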